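/- The pushforward and pullback of piecewise polynomial functions along a proper morphism of regular fans satisfy the projection formula: π_*(π^*(x) · y) = x · π_*(y) for all x ∈ PP^*(Σ) and y ∈ PP^*(Σ'). In particular π_*(π^*(x)) = x · π_*(1). -/

import Mathlib

open scoped BigOperators

namespace PPArakelov

/-- Evaluation of a rational-coefficient multivariate polynomial at a real point. -/
noncomputable def evalR {m : ℕ} (p : MvPolynomial (Fin m) ℚ) (x : Fin m → ℝ) : ℝ :=
  MvPolynomial.eval x (MvPolynomial.map (algebraMap ℚ ℝ) p)

/-- Realization of an integral vector in `N_ℝ`. -/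
def ι {m : ℕ} (v : Fin m → ℤ) : Fin m → ℝ := fun i => (v i : ℝ)

/-- Realization of a rational vector in `N_ℝ`. -/
def ιQ {m : ℕ} (v : Fin m → ℚ) : Fin m → ℝ := fun i => (v i : ℝ)

/-- The convex cone generated by a finite set of vectors. -/
def coneOf {m : ℕ} (s : Finset (Fin m → ℝ)) : Set (Fin m → ℝ) :=
  { x | ∃ c : (Fin m → ℝ) → ℝ, (∀ v, 0 ≤ c v) ∧ x = ∑ v ∈ s, c v • v }

/-- A rational polyhedral cone: one generated by finitely many lattice vectors. -/
def IsRatCone {m : ℕ} (σ : Set (Fin m → ℝ)) : Prop :=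
  ∃ s : Finset (Fin m → ℤ), σ = coneOf (s.image ι)

/-- `τ` is a face of the cone `σ`. -/
def IsFaceOfCone {m : ℕ} (τ σ : Set (Fin m → ℝ)) : Prop :=
  ∃ u : (Fin m → ℝ) →ₗ[ℝ] ℝ, (∀ x ∈ σ, 0 ≤ u x) ∧ τ = {x ∈ σ | u x = 0}

/-- A rational polyhedral fan in `N_ℝ = ℝ^m`. -/
structure Fan (m : ℕ) where
  cones : Set (Set (Fin m → ℝ))
  finite : cones.Finite
  rat : ∀ σ ∈ cones, IsRatCone σ
  face_mem : ∀ σ ∈ cones, ∀ τ, IsFaceOfCone τ σ → τ ∈ cones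
  inter_face : ∀ σ ∈ cones, ∀ σ' ∈ cones,
    IsFaceOfCone (σ ∩ σ') σ ∧ IsFaceOfCone (σ ∩ σ') σ'

/-- The support `|Σ|` of a fan. -/
def Fan.supp {m : ℕ} (F : Fan m) : Set (Fin m → ℝ) := ⋃₀ F.cones

/-- A piecewise polynomial function on a fan (ambient version): on each cone it is
given by a polynomial with rational coefficients. -/
def PPfun {m : ℕ} (F : Fan m) (f : (Fin m → ℝ) → ℝ) : Prop :=
  ∀ σ ∈ F.cones, ∃ p : MvPolynomial (Fin m) ℚ, ∀ x ∈ σ, f x = evalR p x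

/-- A piecewise polynomial function defined on the support `|Σ|` of a fan. -/
def PPfunOn {m : ℕ} (F : Fan m) (f : ↥F.supp → ℝ) : Prop :=
  ∀ σ (hσ : σ ∈ F.cones), ∃ p : MvPolynomial (Fin m) ℚ,
    ∀ x (hx : x ∈ σ), f ⟨x, Set.mem_sUnion.mpr ⟨σ, hσ, hx⟩⟩ = evalR p x

/-- A homogeneous piecewise polynomial function of degree `k` on a fan. -/
def PPHomog {m : ℕ} (F : Fan m) (k : ℕ) (f : (Fin m → ℝ) → ℝ) : Prop :=
  ∀ σ ∈ F.cones, ∃ p : MvPolynomial (Fin m) ℚ, p.IsHomogeneous k ∧ ∀ x ∈ σ, f x = evalR p x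

/-- A piecewise linear function on a fan. -/
def IsPWLinear {m : ℕ} (F : Fan m) (f : (Fin m → ℝ) → ℝ) : Prop :=
  ∀ σ ∈ F.cones, ∃ ℓ : (Fin m → ℝ) →ₗ[ℝ] ℝ, ∀ x ∈ σ, f x = ℓ x

/-- A regular (smooth) fan: every cone is generated by part of a basis of the lattice. -/
def Fan.IsRegular {m : ℕ} (F : Fan m) : Prop :=
  ∀ σ ∈ F.cones, ∃ (b : Module.Basis (Fin m) ℤ (Fin m → ℤ)) (s : Finset (Fin m)),
    σ = coneOf (s.image fun j => ι (b j))

/-- A compatible tuple `(f_σ)_{σ ∈ Σ}` of polynomial functions on the cones of a fan: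
`f_τ = f_σ|_τ` whenever `τ` is a face of `σ`. -/
def CompatTuple {m : ℕ} (F : Fan m) (t : ∀ σ : F.cones, ↥(σ : Set (Fin m → ℝ)) → ℝ) : Prop :=
  (∀ σ : F.cones, ∃ p : MvPolynomial (Fin m) ℚ,
      ∀ x : ↥(σ : Set (Fin m → ℝ)), t σ x = evalR p (x : Fin m → ℝ)) ∧
  ∀ σ τ : F.cones, IsFaceOfCone (τ : Set (Fin m → ℝ)) (σ : Set (Fin m → ℝ)) →
    ∀ x (hx : x ∈ (τ : Set (Fin m → ℝ))) (hx' : x ∈ (σ : Set (Fin m → ℝ))),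
      t τ ⟨x, hx⟩ = t σ ⟨x, hx'⟩

/-- A rational polyhedron: convex hull of finitely many rational points plus a rational cone. -/
def polyhedronOf {m : ℕ} (V R : Finset (Fin m → ℚ)) : Set (Fin m → ℝ) :=
  { x | ∃ a c : (Fin m → ℚ) → ℝ,
      (∀ p, 0 ≤ a p) ∧ (∑ p ∈ V, a p = 1) ∧ (∀ v, 0 ≤ c v) ∧
      x = (∑ p ∈ V, a p • ιQ p) + ∑ v ∈ R, c v • ιQ v }

def IsRatPolyhedron {m : ℕ} (P : Set (Fin m → ℝ)) : Prop :=
  ∃ V R : Finset (Fin m → ℚ), V.Nonempty ∧ P = polyhedronOf V R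

/-- `Q` is a face of the polyhedron `P`. -/
def IsFaceOfPoly {m : ℕ} (Q P : Set (Fin m → ℝ)) : Prop :=
  ∃ (u : (Fin m → ℝ) →ₗ[ℝ] ℝ) (r : ℝ), (∀ x ∈ P, r ≤ u x) ∧ Q = {x ∈ P | u x = r}

/-- A (strongly convex) rational polyhedral complex in `N_ℝ = ℝ^m`. -/
structure PolyComplex (m : ℕ) where
  polys : Set (Set (Fin m → ℝ))
  finite : polys.Finite
  rat : ∀ P ∈ polys, IsRatPolyhedron P
  face_mem : ∀ P ∈ polys, ∀ Q, IsFaceOfPoly Q P → Q.Nonempty → Q ∈ polys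
  inter_face : ∀ P ∈ polys, ∀ P' ∈ polys, (P ∩ P').Nonempty →
    IsFaceOfPoly (P ∩ P') P ∧ IsFaceOfPoly (P ∩ P') P'

/-- A complete polyhedral complex covers all of `N_ℝ`. -/
def PolyComplex.IsComplete {m : ℕ} (C : PolyComplex m) : Prop := ⋃₀ C.polys = Set.univ

/-- The vertices `Π(0)` of a polyhedral complex. -/
def PolyComplex.vtx {m : ℕ} (C : PolyComplex m) : Set (Fin m → ℝ) :=
  {v | ({v} : Set (Fin m → ℝ)) ∈ C.polys}

/-- The cone of a polyhedron `P` at a point `v` (the cone of `P` in the star fan `Π(v)`). -/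
def coneAt {m : ℕ} (v : Fin m → ℝ) (P : Set (Fin m → ℝ)) : Set (Fin m → ℝ) :=
  {y | ∃ c : ℝ, 0 ≤ c ∧ ∃ x ∈ P, y = c • (x - v)}

/-- A piecewise polynomial function of degree `≤ k` on the star fan `Π(v)` at a vertex `v`. -/
def StarPP {m : ℕ} (C : PolyComplex m) (v : Fin m → ℝ) (k : ℕ)
    (f : (Fin m → ℝ) → ℝ) : Prop :=
  ∀ P ∈ C.polys, v ∈ P → ∃ p : MvPolynomial (Fin m) ℚ, p.totalDegree ≤ k ∧
    ∀ y ∈ coneAt v P, f y = evalR p y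

/-- A full-dimensional subset of `ℝ^m`. -/
def FullDim {m : ℕ} (P : Set (Fin m → ℝ)) : Prop := (interior P).Nonempty

/-- An affine piecewise polynomial function of degree `k` on a polyhedral complex:
a tuple `(f_v)` of piecewise polynomial functions on the star fans `Π(v)` such that on
every full-dimensional polyhedron `Λ` with vertices `v, v'`, the representing polynomials
agree: `f_{v,Λ} = f_{v',Λ}` as polynomial functions on `N_ℝ`. -/
def AffinePP {m : ℕ} (C : PolyComplex m) (k : ℕ)
    (f : (Fin m → ℝ) → ((Fin m → ℝ) → ℝ)) : Prop :=
  (∀ v ∈ C.vtx, StarPP C v k (f v)) ∧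
  ∀ Λ ∈ C.polys, FullDim Λ → ∀ v ∈ C.vtx, v ∈ Λ → ∀ v' ∈ C.vtx, v' ∈ Λ →
    ∀ p p' : MvPolynomial (Fin m) ℚ,
      p.totalDegree ≤ k → (∀ y ∈ coneAt v Λ, f v y = evalR p y) →
      p'.totalDegree ≤ k → (∀ y ∈ coneAt v' Λ, f v' y = evalR p' y) →
      ∀ x : Fin m → ℝ, evalR p (x - v) = evalR p' (x - v')

/-- `y` lies in the support of the star fan of `v`. -/
def InStar {m : ℕ} (C : PolyComplex m) (v y : Fin m → ℝ) : Prop :=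
  ∃ P ∈ C.polys, v ∈ P ∧ y ∈ coneAt v P

/-- A piecewise affine function with respect to the complex `C` (rational coefficients). -/
def IsPA {m : ℕ} (C : PolyComplex m) (g : (Fin m → ℝ) → ℝ) : Prop :=
  Continuous g ∧ ∀ Λ ∈ C.polys, ∃ p : MvPolynomial (Fin m) ℚ, p.totalDegree ≤ 1 ∧
    ∀ x ∈ Λ, g x = evalR p x

/-- The tuple `f = (f_v)` induces the global function `g`. -/
def Induces {m : ℕ} (C : PolyComplex m) (f : (Fin m → ℝ) → ((Fin m → ℝ) → ℝ))
    (g : (Fin m → ℝ) → ℝ) : Prop :=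
  ∀ v ∈ C.vtx, ∀ Λ ∈ C.polys, v ∈ Λ → ∀ x ∈ Λ, g x = f v (x - v)

/-- `γ` is a bounded edge of the complex `C` with endpoints `v ≠ w`. -/
def IsBddEdge {m : ℕ} (C : PolyComplex m) (γ : Set (Fin m → ℝ)) (v w : Fin m → ℝ) : Prop :=
  γ ∈ C.polys ∧ v ≠ w ∧ v ∈ C.vtx ∧ w ∈ C.vtx ∧ γ = segment ℝ v w

/-- The condition that the tuple `(f_v)` lies in the kernel of the map `ρ`: for every
bounded edge `γ` with endpoints `v, w`, the pullbacks of `f_v` and `f_w` to the star of `γ`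
agree (affinely based at the respective vertices). -/
def KerRho {m : ℕ} (C : PolyComplex m)
    (f : (Fin m → ℝ) → ((Fin m → ℝ) → ℝ)) : Prop :=
  ∀ γ v w, IsBddEdge C γ v w → ∀ P ∈ C.polys, γ ⊆ P → ∀ x ∈ P, f v (x - v) = f w (x - w)

/-- `C'` refines (subdivides) `C`. -/
def Refines {m : ℕ} (C' C : PolyComplex m) : Prop :=
  ∀ P' ∈ C'.polys, ∃ P ∈ C.polys, P' ⊆ P

/-- The cone `c(P) ⊆ N_ℝ × ℝ_{≥0}` over a polyhedron `P ⊆ N_ℝ`. -/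
def cPoly {m : ℕ} (P : Set (Fin m → ℝ)) : Set (Fin (m + 1) → ℝ) :=
  closure { z | 0 < z (Fin.last m) ∧ (fun i : Fin m => z i.castSucc / z (Fin.last m)) ∈ P }

/-- A regular SCR polyhedral complex: the cone `c(P)` of every polyhedron is a regular cone. -/
def PolyComplex.IsRegular {m : ℕ} (C : PolyComplex m) : Prop :=
  ∀ P ∈ C.polys, ∃ (b : Module.Basis (Fin (m + 1)) ℤ (Fin (m + 1) → ℤ)) (s : Finset (Fin (m + 1))),
    cPoly P = coneOf (s.image fun j => ι (b j))

/-- The recession cone of a polyhedron. -/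
def recCone {m : ℕ} (P : Set (Fin m → ℝ)) : Set (Fin m → ℝ) :=
  {y | ∀ x ∈ P, ∀ c : ℝ, 0 ≤ c → x + c • y ∈ P}

/-- The recession fan (as a set of cones) of a polyhedral complex. -/
def recSet {m : ℕ} (C : PolyComplex m) : Set (Set (Fin m → ℝ)) :=
  {σ | ∃ P ∈ C.polys, σ = recCone P}

/-- Membership in `R(Σ)`: complete regular SCR polyhedral complexes with recession fan `Σ`. -/
def InRSigma {m : ℕ} (F : Fan m) (C : PolyComplex m) : Prop :=
  C.IsComplete ∧ C.IsRegular ∧ recSet C = F.cones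

/-- Homogeneous piecewise polynomial functions of degree `k` on the fan `c(Π)`. -/
def PPconeHom {m : ℕ} (C : PolyComplex m) (k : ℕ) (f : (Fin (m + 1) → ℝ) → ℝ) : Prop :=
  ∀ P ∈ C.polys, ∃ p : MvPolynomial (Fin (m + 1)) ℚ, p.IsHomogeneous k ∧
    ∀ z ∈ cPoly P, f z = evalR p z

/-- `PP^k_Σ(N_ℝ ⊕ ℝ_{≥0})`: functions that are piecewise polynomial of degree `k`
with respect to `c(Π)` for some `Π ∈ R(Σ)`. -/
def PPSigma {m : ℕ} (F : Fan m) (k : ℕ) (f : (Fin (m + 1) → ℝ) → ℝ) : Prop :=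
  ∃ C : PolyComplex m, InRSigma F C ∧ PPconeHom C k f

/-- The canonical piecewise-linear function attached to the ray through `v` (value `1` at
`v`, vanishing on cones not containing `v`). -/
def IsRayFunGen {m : ℕ} (F : Fan m) (v : Fin m → ℝ) (f : (Fin m → ℝ) → ℝ) : Prop :=
  IsPWLinear F f ∧ PPfun F f ∧ f v = 1 ∧
  ∀ σ ∈ F.cones, v ∉ σ → ∀ x ∈ σ, f x = 0

/-- A family `σ ↦ φ_σ` of canonical piecewise polynomial generators: `φ_σ` is the product
of the ray functions of the rays of the regular cone `σ`. -/
def IsCanonFamily {m : ℕ} (F : Fan m) (Φ : Set (Fin m → ℝ) → ((Fin m → ℝ) → ℝ)) : Prop :=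
  ∀ σ ∈ F.cones, ∃ (b : Module.Basis (Fin m) ℤ (Fin m → ℤ)) (s : Finset (Fin m))
    (rf : Fin m → ((Fin m → ℝ) → ℝ)),
      σ = coneOf (s.image fun j => ι (b j)) ∧
      (∀ j ∈ s, IsRayFunGen F (ι (b j)) (rf j)) ∧
      ∀ x, Φ σ x = ∏ j ∈ s, rf j x

/-- A maximal (full-dimensional) cone of a fan. -/
def IsMaxCone {m : ℕ} (F : Fan m) (σ : Set (Fin m → ℝ)) : Prop :=
  σ ∈ F.cones ∧ Submodule.span ℝ σ = ⊤

/-- `σ` is the minimal cone of `F` containing the set `S`. -/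
def IsMinConeOver {m : ℕ} (F : Fan m) (S σ : Set (Fin m → ℝ)) : Prop :=
  σ ∈ F.cones ∧ S ⊆ σ ∧ ∀ τ ∈ F.cones, S ⊆ τ → σ ⊆ τ

/-- The polynomial `p` represents the function `f` on the cone `σ`. -/
def Represents {m : ℕ} (f : (Fin m → ℝ) → ℝ) (σ : Set (Fin m → ℝ))
    (p : MvPolynomial (Fin m) ℚ) : Prop :=
  ∀ x ∈ σ, f x = evalR p x

/-- Maximal cones of `F'` whose image under `μ` has minimal containing cone `σ` in `F`. -/
def MaxOver {m : ℕ} (F' F : Fan m) (μ : (Fin m → ℝ) ≃ₗ[ℝ] (Fin m → ℝ))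
    (σ : Set (Fin m → ℝ)) : Set (Set (Fin m → ℝ)) :=
  {σ' | IsMaxCone F' σ' ∧ IsMinConeOver F (μ '' σ') σ}

/-- The operator `P` realizes the pushforward formula
`(π_* f)_σ = φ_σ · Σ_{μ(σ')=σ} φ_{σ'}^{-1} f_{σ'}` on maximal cones (with cleared
denominators, as an identity of the unique representing polynomials). -/
def PushFormula {m : ℕ} (F' F : Fan m) (μ : (Fin m → ℝ) ≃ₗ[ℝ] (Fin m → ℝ))
    (Φ' Φ : Set (Fin m → ℝ) → ((Fin m → ℝ) → ℝ))
    (P : ((Fin m → ℝ) → ℝ) → ((Fin m → ℝ) → ℝ)) : Prop :=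
  (∀ f, PPfun F' f → PPfun F (P f)) ∧
  ∀ f, PPfun F' f →
    ∀ q pΦ' : Set (Fin m → ℝ) → MvPolynomial (Fin m) ℚ,
      (∀ σ', IsMaxCone F' σ' → Represents f σ' (q σ') ∧ Represents (Φ' σ') σ' (pΦ' σ')) →
      ∀ σ, IsMaxCone F σ →
        ∀ r pσ : MvPolynomial (Fin m) ℚ, Represents (P f) σ r → Represents (Φ σ) σ pσ →
          ∀ y : Fin m → ℝ,
            evalR r y * ∏ᶠ σ' ∈ MaxOver F' F μ σ, evalR (pΦ' σ') (μ.symm y)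
              = evalR pσ y * ∑ᶠ σ' ∈ MaxOver F' F μ σ,
                  evalR (q σ') (μ.symm y) *
                    ∏ᶠ σ'' ∈ (MaxOver F' F μ σ) \ {σ'}, evalR (pΦ' σ'') (μ.symm y)

/-- The pullback of an affine piecewise polynomial tuple along a refinement `C' → C`. -/
def IsPullbackTuple {m : ℕ} (C C' : PolyComplex m) (k : ℕ)
    (f f' : (Fin m → ℝ) → ((Fin m → ℝ) → ℝ)) : Prop :=
  (∀ v' ∈ C'.vtx, v' ∈ C.vtx → ∀ y, InStar C' v' y → f' v' y = f v' y) ∧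
  (∀ v' ∈ C'.vtx, v' ∉ C.vtx → ∀ Λ ∈ C.polys, FullDim Λ → v' ∈ Λ →
    ∀ v ∈ C.vtx, v ∈ Λ → ∀ p : MvPolynomial (Fin m) ℚ, p.totalDegree ≤ k →
      (∀ y ∈ coneAt v Λ, f v y = evalR p y) →
      ∀ P' ∈ C'.polys, v' ∈ P' → P' ⊆ Λ → ∀ y ∈ coneAt v' P',
        f' v' y = evalR p ((y + v') - v))

/-- The piecewise linear function `φ_{v,γ}` attached at the vertex `v` to the edge `γ`
towards the vertex `w`: linear on the cones of `Π(v)`, vanishing on cones of polyhedra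
not containing `w`, normalized on the ray towards `w`. -/
def IsRayFunAt {m : ℕ} (C : PolyComplex m) (v w : Fin m → ℝ)
    (φ : (Fin m → ℝ) → ℝ) : Prop :=
  (∀ P ∈ C.polys, v ∈ P → ∃ ℓ : (Fin m → ℝ) →ₗ[ℝ] ℝ, ∀ y ∈ coneAt v P, φ y = ℓ y) ∧
  (∀ P ∈ C.polys, v ∈ P → w ∉ P → ∀ y ∈ coneAt v P, φ y = 0) ∧
  (∃ c : ℝ, 0 < c ∧ φ (c • (w - v)) = 1)

/-- `g = -γρ(f)`: the characterization of the composite map `-γρ` in terms of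
representing polynomials, following the explicit formula of the pushforward and pullback
maps: `(-γρ f)_v = Σ_γ (u_{v,γ*} u_{v_γ,γ}^* f_{v_γ} - φ_{v,γ} f_v)`. -/
def IsMinusGammaRho {m : ℕ} (C : PolyComplex m) (k : ℕ)
    (φ : (Fin m → ℝ) → (Fin m → ℝ) → ((Fin m → ℝ) → ℝ))
    (f g : (Fin m → ℝ) → ((Fin m → ℝ) → ℝ)) : Prop :=
  ∀ v ∈ C.vtx, ∀ P ∈ C.polys, FullDim P → v ∈ P →
    ∀ q : (Fin m → ℝ) → MvPolynomial (Fin m) ℚ,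
      (∀ u ∈ C.vtx, u ∈ P →
        (q u).totalDegree ≤ k ∧ ∀ y ∈ coneAt u P, f u y = evalR (q u) y) →
      ∀ y ∈ coneAt v P,
        g v y = ∑ᶠ w ∈ {w | w ∈ C.vtx ∧ w ≠ v ∧ segment ℝ v w ∈ C.polys ∧
                            segment ℝ v w ⊆ P},
          φ v w y * (evalR (q w) ((y + v) - w) - evalR (q v) y)



section Helpers
open MvPolynomial

variable {n : ℕ}

lemma evalR_eq_aeval (p : MvPolynomial (Fin n) ℚ) (x : Fin n → ℝ) :
    evalR p x = MvPolynomial.aeval x p := by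
  rw [evalR, eval_map, aeval_def]

lemma evalR_mul (p q : MvPolynomial (Fin n) ℚ) (x : Fin n → ℝ) :
    evalR (p * q) x = evalR p x * evalR q x := by
  simp [evalR_eq_aeval]

lemma evalR_sub (p q : MvPolynomial (Fin n) ℚ) (x : Fin n → ℝ) :
    evalR (p - q) x = evalR p x - evalR q x := by
  simp [evalR_eq_aeval]

lemma evalR_one (x : Fin n → ℝ) : evalR (1 : MvPolynomial (Fin n) ℚ) x = 1 := by
  simp [evalR_eq_aeval]

lemma evalR_prod {α : Type*} (s : Finset α) (f : α → MvPolynomial (Fin n) ℚ)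
    (x : Fin n → ℝ) : evalR (∏ i ∈ s, f i) x = ∏ i ∈ s, evalR (f i) x := by
  simp [evalR_eq_aeval]

/-- Pullback of a polynomial along a linear map given by a rational matrix. -/
noncomputable def pullPoly (M : Fin n → Fin n → ℚ) (p : MvPolynomial (Fin n) ℚ) :
    MvPolynomial (Fin n) ℚ :=
  MvPolynomial.bind₁ (fun i => ∑ j, MvPolynomial.C (M i j) * MvPolynomial.X j) p

lemma evalR_pullPoly (M : Fin n → Fin n → ℚ) (p : MvPolynomial (Fin n) ℚ)
    (w : Fin n → ℝ) :
    evalR (pullPoly M p) w = evalR p (fun i => ∑ j, (M i j : ℝ) * w j) := by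
  rw [evalR_eq_aeval, evalR_eq_aeval, pullPoly, aeval_bind₁]
  have : (fun i => (aeval w) (∑ j, C (M i j) * X j)) = fun i => ∑ j, (M i j : ℝ) * w j := by
    funext i
    simp [eq_ratCast]
  rw [this]

end Helpers


section Canon
open MvPolynomial

variable {n : ℕ}

lemma ι_injective : Function.Injective (ι (m := n)) := by
  intro a b h
  funext k
  have := congrFun h k
  simp only [ι] at this
  exact_mod_cast this

lemma canon_rep (F : Fan n) (Φ : Set (Fin n → ℝ) → ((Fin n → ℝ) → ℝ))
    (hΦ : IsCanonFamily F Φ) (σ : Set (Fin n → ℝ)) (hσ : σ ∈ F.cones) :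
    ∃ p : MvPolynomial (Fin n) ℚ, Represents (Φ σ) σ p := by
  classical
  obtain ⟨b, s, rf, hσeq, hrf, hΦprod⟩ := hΦ σ hσ
  choose pj hpj using fun (j : Fin n) (hj : j ∈ s) => (hrf j hj).2.1 σ hσ
  refine ⟨∏ j ∈ s.attach, pj j.1 j.2, fun x hx => ?_⟩
  rw [hΦprod, evalR_prod, ← Finset.prod_attach s (fun j => rf j x)]
  exact Finset.prod_congr rfl fun j _ => hpj j.1 j.2 x hx

lemma canon_one (F : Fan n) (Φ : Set (Fin n → ℝ) → ((Fin n → ℝ) → ℝ))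
    (hΦ : IsCanonFamily F Φ) (σ : Set (Fin n → ℝ)) (hσ : σ ∈ F.cones) :
    ∃ v ∈ σ, Φ σ v = 1 := by
  classical
  obtain ⟨b, s, rf, hσeq, hrf, hΦprod⟩ := hΦ σ hσ
  set v : Fin n → (Fin n → ℝ) := fun j => ι (b j) with hv
  have vinj : Function.Injective v := fun i j h => b.injective (ι_injective h)
  -- each generator lies in σ
  have hmemgen : ∀ j ∈ s, v j ∈ σ := by
    intro j hj
    rw [hσeq]
    refine ⟨fun u => if u = v j then 1 else 0, fun u => by positivity, ?_⟩
    rw [Finset.sum_eq_single_of_mem (v j) (Finset.mem_image.mpr ⟨j, hj, rfl⟩)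
      (fun u hu hne => by simp [hne])]
    simp
  -- the sum of generators lies in σ
  set v0 : Fin n → ℝ := ∑ j ∈ s, v j with hv0def
  have hv0 : v0 ∈ σ := by
    rw [hσeq]
    refine ⟨fun u => if u ∈ s.image (fun j => ι (b j)) then 1 else 0,
      fun u => by positivity, ?_⟩
    have : ∀ u ∈ s.image (fun j => ι (b j)),
        (if u ∈ s.image (fun j => ι (b j)) then (1:ℝ) else 0) • u = u := by
      intro u hu; simp [hu]
    rw [Finset.sum_congr rfl this, Finset.sum_image (fun a _ c _ h => vinj h)]
  -- dual linear functionals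
  have key : ∀ i ∈ s, rf i v0 = 1 := by
    intro i hi
    set U : (Fin n → ℝ) →ₗ[ℝ] ℝ :=
      ∑ k, (((b.coord i) (Pi.single k 1) : ℤ) : ℝ) • (LinearMap.proj k) with hU
    have hUι : ∀ m : Fin n → ℤ, U (ι m) = ((b.coord i m : ℤ) : ℝ) := by
      intro m
      have hm : (∑ k, (m k) • Pi.single k (1:ℤ)) = m := by
        calc ∑ k, (m k) • Pi.single k (1:ℤ) = ∑ k, Pi.single k (m k) :=
              Finset.sum_congr rfl fun k _ => by rw [← Pi.single_smul, smul_eq_mul, mul_one]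
          _ = m := Finset.univ_sum_single m
      have : (b.coord i) m = ∑ k, (m k) * (b.coord i) (Pi.single k 1) := by
        conv_lhs => rw [← hm]
        rw [map_sum]
        exact Finset.sum_congr rfl fun k _ => by rw [map_smul, smul_eq_mul]
      rw [this]
      simp [hU, ι]
      ring_nf
      exact Finset.sum_congr rfl fun k _ => by ring
    have hUvj : ∀ j, U (v j) = if j = i then 1 else 0 := by
      intro j
      rw [hv, hUι (b j)]
      rw [Module.Basis.coord_apply, Module.Basis.repr_self, Finsupp.single_apply]
      split <;> simp
    have hUnonneg : ∀ x ∈ σ, 0 ≤ U x := by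
      intro x hx
      rw [hσeq] at hx
      obtain ⟨c, hc, rfl⟩ := hx
      rw [map_sum]
      refine Finset.sum_nonneg fun u hu => ?_
      obtain ⟨j, hj, rfl⟩ := Finset.mem_image.mp hu
      rw [map_smul, smul_eq_mul, hUvj j]
      split
      · simpa using hc _
      · simp
    set τi : Set (Fin n → ℝ) := {x ∈ σ | U x = 0} with hτi
    have hτimem : τi ∈ F.cones := F.face_mem σ hσ τi ⟨U, hUnonneg, rfl⟩
    have hviτ : v i ∉ τi := by
      intro h
      have := h.2
      rw [hUvj i] at this
      simp at this
    have hvjτ : ∀ j ∈ s, j ≠ i → v j ∈ τi := by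
      intro j hj hji
      refine ⟨hmemgen j hj, ?_⟩
      rw [hUvj j]
      simp [hji]
    -- rf i vanishes at the other generators
    have hzero : ∀ j ∈ s, j ≠ i → rf i (v j) = 0 := fun j hj hji =>
      (hrf i hi).2.2.2 τi hτimem hviτ (v j) (hvjτ j hj hji)
    -- rf i is linear on σ
    obtain ⟨ℓ, hℓ⟩ := (hrf i hi).1 σ hσ
    have : rf i v0 = ∑ j ∈ s, rf i (v j) := by
      rw [hℓ v0 hv0, hv0def, map_sum]
      exact Finset.sum_congr rfl fun j hj => (hℓ (v j) (hmemgen j hj)).symm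
    rw [this, Finset.sum_eq_single_of_mem i hi (fun j hj hji => hzero j hj hji)]
    exact (hrf i hi).2.2.1
  refine ⟨v0, hv0, ?_⟩
  rw [hΦprod]
  exact Finset.prod_eq_one key

end Canon

/-- Projection formula: for a proper morphism of regular fans with all
maximal cones of equal (full) dimension, the pushforward `π_*` (characterized by the
formula `(π_* f)_σ = φ_σ Σ_{μ(σ')=σ} φ_{σ'}^{-1} f_{σ'}`) and the pullback
`π^* x = x ∘ μ` satisfy `π_*(π^*(x) · y) = x · π_*(y)`; in particular
`π_*(π^*(x)) = x · π_*(1)`. -/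
theorem stmt9 {n : ℕ} (F' F : Fan n) (μ : (Fin n → ℝ) ≃ₗ[ℝ] (Fin n → ℝ))
    (hint : ∀ v : Fin n → ℤ, ∃ w : Fin n → ℤ, μ (ι v) = ι w)
    (hmap : ∀ σ' ∈ F'.cones, ∃ σ ∈ F.cones, μ '' σ' ⊆ σ)
    (hproper : μ ⁻¹' F.supp = F'.supp)
    (hreg : F.IsRegular) (hreg' : F'.IsRegular)
    (hpure : ∀ σ ∈ F.cones, ∃ τ, IsMaxCone F τ ∧ σ ⊆ τ)
    (hpure' : ∀ σ' ∈ F'.cones, ∃ τ', IsMaxCone F' τ' ∧ σ' ⊆ τ')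
    (Φ' Φ : Set (Fin n → ℝ) → ((Fin n → ℝ) → ℝ))
    (hΦ' : IsCanonFamily F' Φ') (hΦ : IsCanonFamily F Φ)
    (P : ((Fin n → ℝ) → ℝ) → ((Fin n → ℝ) → ℝ))
    (hP : PushFormula F' F μ Φ' Φ P) :
    ∀ x y : (Fin n → ℝ) → ℝ, PPfun F x → PPfun F' y → ∀ z ∈ F.supp,
      P (fun v => x (μ v) * y v) z = x z * P y z ∧
      P (fun v => x (μ v)) z = x z * P (fun _ => 1) z := by
  classical
  -- the rational matrix of μ
  choose col hcol using hint
  set Mq : Fin n → Fin n → ℚ := fun i j => ((col (Pi.single j 1)) i : ℚ) with hMq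
  have hιs : ∀ j : Fin n, ι (Pi.single j (1:ℤ)) = Pi.single j (1:ℝ) := by
    intro j; funext k
    simp [ι, Pi.single_apply, apply_ite (fun z : ℤ => (z : ℝ))]
  have hμw : ∀ w : Fin n → ℝ, μ w = fun i => ∑ j, (Mq i j : ℝ) * w j := by
    intro w
    have hw : (∑ j, w j • (Pi.single j (1:ℝ) : Fin n → ℝ)) = w := by
      calc ∑ j, w j • (Pi.single j (1:ℝ) : Fin n → ℝ)
            = ∑ j, (Pi.single j (w j) : Fin n → ℝ) :=
            Finset.sum_congr rfl fun k _ => by rw [← Pi.single_smul, smul_eq_mul, mul_one]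
        _ = w := Finset.univ_sum_single w
    conv_lhs => rw [← hw]
    rw [map_sum]
    funext i
    rw [Finset.sum_apply]
    refine Finset.sum_congr rfl fun j _ => ?_
    rw [map_smul, ← hιs j, hcol (Pi.single j 1)]
    simp [hMq, ι, mul_comm]
  have hpull : ∀ (p : MvPolynomial (Fin n) ℚ) (w : Fin n → ℝ),
      evalR (pullPoly Mq p) w = evalR p (μ w) := by
    intro p w; rw [evalR_pullPoly, hμw w]
  intro x y₀ hx hy₀ z hz
  have hone : PPfun F' (fun _ : Fin n → ℝ => (1:ℝ)) :=
    fun σ' _ => ⟨1, fun w _ => (evalR_one w).symm⟩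
  have hpullpp : ∀ g : (Fin n → ℝ) → ℝ, PPfun F g → PPfun F' (fun v => g (μ v)) := by
    intro g hg σ' hσ'
    obtain ⟨σ2, hσ2, hsub⟩ := hmap σ' hσ'
    obtain ⟨p, hp⟩ := hg σ2 hσ2
    exact ⟨pullPoly Mq p, fun w hw => by rw [hpull]; exact hp (μ w) (hsub ⟨w, hw, rfl⟩)⟩
  have hmulpp : ∀ f g : (Fin n → ℝ) → ℝ, PPfun F' f → PPfun F' g →
      PPfun F' (fun v => f v * g v) := by
    intro f g hf hg σ' hσ'
    obtain ⟨p, hp⟩ := hf σ' hσ'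
    obtain ⟨q, hq⟩ := hg σ' hσ'
    exact ⟨p * q, fun w hw => by rw [evalR_mul, ← hp w hw, ← hq w hw]⟩
  have main : ∀ y : (Fin n → ℝ) → ℝ, PPfun F' y →
      P (fun v => x (μ v) * y v) z = x z * P y z := by
    intro y hy
    obtain ⟨σ0, hσ0, hzσ0⟩ := hz
    obtain ⟨τ, hτmax, hστ⟩ := hpure σ0 hσ0
    have hτ : τ ∈ F.cones := hτmax.1
    have hzτ : z ∈ τ := hστ hzσ0
    obtain ⟨pX, hpX⟩ := hx τ hτ
    set f1 : (Fin n → ℝ) → ℝ := fun v => x (μ v) * y v with hf1def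
    have hf1 : PPfun F' f1 := hmulpp _ _ (hpullpp x hx) hy
    have hMsub : MaxOver F' F μ τ ⊆ F'.cones := fun σ' h => h.1.1
    have hMfin : (MaxOver F' F μ τ).Finite := F'.finite.subset hMsub
    set T : Finset (Set (Fin n → ℝ)) := hMfin.toFinset with hT
    have hMT : MaxOver F' F μ τ = ↑T := hMfin.coe_toFinset.symm
    set q2 : Set (Fin n → ℝ) → MvPolynomial (Fin n) ℚ :=
      fun σ' => if h : σ' ∈ F'.cones then Classical.choose (hy σ' h) else 0 with hq2
    have hq2r : ∀ σ' ∈ F'.cones, Represents y σ' (q2 σ') := by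
      intro σ' h
      simp only [hq2, dif_pos h]
      exact fun w hw => Classical.choose_spec (hy σ' h) w hw
    set pF : Set (Fin n → ℝ) → MvPolynomial (Fin n) ℚ :=
      fun σ' => if h : σ' ∈ F'.cones then Classical.choose (canon_rep F' Φ' hΦ' σ' h) else 0
      with hpF
    have hpFr : ∀ σ' ∈ F'.cones, Represents (Φ' σ') σ' (pF σ') := by
      intro σ' h
      simp only [hpF, dif_pos h]
      exact Classical.choose_spec (canon_rep F' Φ' hΦ' σ' h)
    set q1 : Set (Fin n → ℝ) → MvPolynomial (Fin n) ℚ :=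
      fun σ' => if σ' ∈ MaxOver F' F μ τ then pullPoly Mq pX * q2 σ'
        else if h : σ' ∈ F'.cones then Classical.choose (hf1 σ' h) else 0 with hq1
    have hq1r : ∀ σ', IsMaxCone F' σ' → Represents f1 σ' (q1 σ') := by
      intro σ' hmax
      by_cases hM' : σ' ∈ MaxOver F' F μ τ
      · intro w hw
        simp only [hq1, if_pos hM']
        rw [evalR_mul, hpull]
        have hμτ : μ w ∈ τ := hM'.2.2.1 ⟨w, hw, rfl⟩
        rw [← hpX (μ w) hμτ, ← hq2r σ' hmax.1 w hw]
      · intro w hw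
        simp only [hq1, if_neg hM', dif_pos hmax.1]
        exact Classical.choose_spec (hf1 σ' hmax.1) w hw
    obtain ⟨r1, hr1⟩ := (hP.1 f1 hf1) τ hτ
    obtain ⟨r2, hr2⟩ := (hP.1 y hy) τ hτ
    obtain ⟨pσ, hpσ⟩ := canon_rep F Φ hΦ τ hτ
    have E1 := hP.2 f1 hf1 q1 pF (fun σ' h => ⟨hq1r σ' h, hpFr σ' h.1⟩) τ hτmax r1 pσ hr1 hpσ
    have E2 := hP.2 y hy q2 pF (fun σ' h => ⟨hq2r σ' h.1, hpFr σ' h.1⟩) τ hτmax r2 pσ hr2 hpσ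
    have herase : ∀ σ' : Set (Fin n → ℝ),
        ((↑T : Set (Set (Fin n → ℝ))) \ {σ'}) = ↑(T.erase σ') :=
      fun σ' => (Finset.coe_erase σ' T).symm
    have key : ∀ w : Fin n → ℝ,
        (evalR r1 (μ w) - evalR pX (μ w) * evalR r2 (μ w)) *
          ∏ σ' ∈ T, evalR (pF σ') w = 0 := by
      intro w
      have h1 := E1 (μ w)
      have h2 := E2 (μ w)
      rw [hMT] at h1 h2
      simp only [LinearEquiv.symm_apply_apply, herase, finprod_mem_coe_finset,
        finsum_mem_coe_finset] at h1 h2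
      have hterm : ∀ σ' ∈ T, evalR (q1 σ') w * ∏ σ'' ∈ T.erase σ', evalR (pF σ'') w
          = evalR pX (μ w) * (evalR (q2 σ') w * ∏ σ'' ∈ T.erase σ', evalR (pF σ'') w) := by
        intro σ' hσ'T
        have hσ'M : σ' ∈ MaxOver F' F μ τ := hMfin.mem_toFinset.mp hσ'T
        simp only [hq1, if_pos hσ'M]
        rw [evalR_mul, hpull]
        ring
      rw [Finset.sum_congr rfl hterm, ← Finset.mul_sum] at h1
      linear_combination h1 - evalR pX (μ w) * h2
    set D : MvPolynomial (Fin n) ℚ :=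
      (pullPoly Mq r1 - pullPoly Mq pX * pullPoly Mq r2) * ∏ σ' ∈ T, pF σ' with hD
    have hDzero : ∀ w, evalR D w = 0 := by
      intro w
      rw [hD, evalR_mul, evalR_sub, evalR_mul, hpull, hpull, hpull, evalR_prod]
      exact key w
    have hmapD : MvPolynomial.map (algebraMap ℚ ℝ) D = 0 := by
      apply MvPolynomial.funext
      intro w
      rw [map_zero]
      exact hDzero w
    rw [hD, map_mul, map_prod] at hmapD
    rcases mul_eq_zero.mp hmapD with hcase | hcase
    · have hzero : ∀ w, evalR (pullPoly Mq r1) w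
          - evalR (pullPoly Mq pX) w * evalR (pullPoly Mq r2) w = 0 := by
        intro w
        have h0 : evalR (pullPoly Mq r1 - pullPoly Mq pX * pullPoly Mq r2) w = 0 := by
          show MvPolynomial.eval w (MvPolynomial.map (algebraMap ℚ ℝ)
            (pullPoly Mq r1 - pullPoly Mq pX * pullPoly Mq r2)) = 0
          rw [hcase, map_zero]
        rw [evalR_sub, evalR_mul] at h0
        exact h0
      have hfin := hzero (μ.symm z)
      rw [hpull, hpull, hpull, LinearEquiv.apply_symm_apply] at hfin
      rw [hr1 z hzτ, hr2 z hzτ, hpX z hzτ]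
      linarith
    · exfalso
      obtain ⟨σ', hσ'T, hσ'0⟩ := Finset.prod_eq_zero_iff.mp hcase
      have hσ'M : σ' ∈ MaxOver F' F μ τ := hMfin.mem_toFinset.mp hσ'T
      have hσ'c : σ' ∈ F'.cones := hMsub hσ'M
      obtain ⟨v0, hv0, hv01⟩ := canon_one F' Φ' hΦ' σ' hσ'c
      have h1 : evalR (pF σ') v0 = 1 := by rw [← hpFr σ' hσ'c v0 hv0, hv01]
      have h2 : evalR (pF σ') v0 = 0 := by
        show MvPolynomial.eval v0 (MvPolynomial.map (algebraMap ℚ ℝ) (pF σ')) = 0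
        rw [hσ'0, map_zero]
      rw [h1] at h2
      norm_num at h2
  refine ⟨main y₀ hy₀, ?_⟩
  have h := main (fun _ => 1) hone
  simpa using h


end PPArakelov
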